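/- For positive reals a, b with a ≥ b, and a Hermitian positive definite n×n matrix A with ρ_A = max_i ∑_{j≠i}|A_{ij}|/A_{ii} < 1, the two-sided bound holds: |log det(A) − ∑_i log A_{ii}| ≤ max{0, n·|log(1−ρ_A)|}, i.e., ∑_i log A_{ii} + n·log(1−ρ_A) ≤ log det(A) ≤ ∑_i log A_{ii}. -/

import Mathlib

open scoped ComplexOrder
open Matrix Finset

theorem log_det_two_sided {n : ℕ} (hn : 0 < n) (A : Matrix (Fin n) (Fin n) ℂ)
    (hA : A.PosDef)
    (ρ : ℝ)
    (hρ_def : ρ = (Finset.univ.sup' (Finset.univ_nonempty_iff.mpr ⟨⟨0, hn⟩⟩)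
      fun i => (∑ j ∈ Finset.univ.erase i, ‖A i j‖) / (A i i).re))
    (hρ : ρ < 1) :
    (∑ i, Real.log (A i i).re) + n * Real.log (1 - ρ)
        ≤ Real.log A.det.re ∧
      Real.log A.det.re ≤ ∑ i, Real.log (A i i).re := by
  have hne : (Finset.univ : Finset (Fin n)).Nonempty := Finset.univ_nonempty_iff.mpr ⟨⟨0, hn⟩⟩
  set d : Fin n → ℝ := fun i => (A i i).re with hd_def
  -- positivity of diagonal
  have hd : ∀ i, 0 < d i := by
    intro i
    have := hA.re_dotProduct_pos (x := Pi.single i 1) (by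
      simp [Function.ne_iff])
    simpa [dotProduct, Matrix.mulVec, Pi.single_apply, Finset.sum_ite_eq] using this
  -- diagonal entries are real
  have hAd : ∀ i, A i i = (d i : ℂ) := by
    intro i
    have h1 : (starRingEnd ℂ) (A i i) = A i i := by
      have := congrFun (congrFun hA.1 i) i
      simpa [Matrix.conjTranspose_apply] using this
    exact (Complex.conj_eq_iff_re.mp h1).symm
  set s : Fin n → ℝ := fun i => Real.sqrt (d i) with hs_def
  have hs : ∀ i, 0 < s i := fun i => Real.sqrt_pos.mpr (hd i)
  have hs2 : ∀ i, s i * s i = d i := fun i => Real.mul_self_sqrt (hd i).le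
  set σ : Fin n → ℂ := fun i => ((s i)⁻¹ : ℝ) with hσ_def
  have hσ0 : ∀ i, σ i ≠ 0 := fun i => by
    simp [hσ_def, (hs i).ne']
  set B : Matrix (Fin n) (Fin n) ℂ := Matrix.diagonal σ * A * Matrix.diagonal σ with hB_def
  have hB : B.IsHermitian := by
    have hσstar : star σ = σ := by funext i; simp [hσ_def]
    simp [hB_def, Matrix.IsHermitian, Matrix.conjTranspose_mul, Matrix.diagonal_conjTranspose,
      hσstar, hA.1.eq, Matrix.mul_assoc]
  set lam : Fin n → ℝ := hB.eigenvalues with hlam_def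
  have hkey : ∀ i, σ i * σ i * (d i : ℂ) = 1 := by
    intro i
    rw [← hs2 i]
    push_cast
    field_simp [hσ_def]
    simp only [hσ_def, ← mul_pow, ← Complex.ofReal_mul, inv_mul_cancel₀ (hs i).ne', Complex.ofReal_one, one_pow]
  -- ρ is nonneg and bounds row sums
  have hrow : ∀ i, ∑ j ∈ Finset.univ.erase i, ‖A i j‖ ≤ ρ * d i := by
    intro i
    have h1 : (∑ j ∈ Finset.univ.erase i, ‖A i j‖) / (A i i).re ≤ ρ := by
      rw [hρ_def]
      exact Finset.le_sup'
        (f := fun i => (∑ j ∈ Finset.univ.erase i, ‖A i j‖) / (A i i).re)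
        (Finset.mem_univ i)
    have := (div_le_iff₀ (hd i)).mp h1
    linarith
  have hρ0 : 0 ≤ ρ := by
    obtain ⟨i, hi⟩ := hne
    have h1 : 0 ≤ (∑ j ∈ Finset.univ.erase i, ‖A i j‖) / (A i i).re :=
      div_nonneg (Finset.sum_nonneg fun j _ => norm_nonneg _) (hd i).le
    rw [hρ_def]
    exact le_trans h1 (Finset.le_sup'
        (f := fun i => (∑ j ∈ Finset.univ.erase i, ‖A i j‖) / (A i i).re)
        (Finset.mem_univ i))
  -- Gershgorin: |lam k - 1| ≤ ρ
  have hgersh : ∀ k, |lam k - 1| ≤ ρ := by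
    intro k
    set v : Fin n → ℂ := ⇑(hB.eigenvectorBasis k) with hv_def
    have hv : B *ᵥ v = (lam k : ℂ) • v := by
      have := hB.mulVec_eigenvectorBasis k
      simpa [hv_def, Complex.coe_smul] using this
    have hv0 : ∃ j, v j ≠ 0 := by
      by_contra h
      push_neg at h
      have : hB.eigenvectorBasis k = 0 := by
        ext j; exact h j
      exact hB.eigenvectorBasis.orthonormal.ne_zero k this
    set x : Fin n → ℂ := fun i => σ i * v i with hx_def
    have hAx : ∀ i, (A *ᵥ x) i = (lam k : ℂ) * (d i : ℂ) * x i := by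
      intro i
      have h1 : (B *ᵥ v) i = (lam k : ℂ) * v i := by rw [hv]; simp
      have h2 : (B *ᵥ v) i = σ i * (A *ᵥ x) i := by
        simp only [hB_def, ← Matrix.mulVec_mulVec]
        have hxv : Matrix.diagonal σ *ᵥ v = x := by
          funext j; simp [Matrix.mulVec_diagonal, hx_def, mul_comm]
        rw [hxv]
        simp [Matrix.mulVec_diagonal]
      have h3 : σ i * (A *ᵥ x) i = (lam k : ℂ) * v i := by rw [← h2, h1]
      apply mul_left_cancel₀ (hσ0 i)
      rw [h3]
      have hxi : x i = σ i * v i := rfl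
      calc (lam k : ℂ) * v i = (σ i * σ i * (d i : ℂ)) * ((lam k : ℂ) * v i) := by
            rw [hkey i]; ring
        _ = σ i * ((lam k : ℂ) * (d i : ℂ) * x i) := by rw [hxi]; ring
    obtain ⟨i, -, hi⟩ := Finset.exists_max_image Finset.univ
      (fun j => ‖x j‖) hne
    have hxi : 0 < ‖x i‖ := by
      obtain ⟨j, hj⟩ := hv0
      have hxj : x j ≠ 0 := mul_ne_zero (hσ0 j) hj
      exact lt_of_lt_of_le (norm_pos_iff.mpr hxj) (hi j (Finset.mem_univ j))
    -- the Gershgorin computation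
    have heq : ((lam k : ℂ) - 1) * (d i : ℂ) * x i = ∑ j ∈ Finset.univ.erase i, A i j * x j := by
      have h1 : (∑ j, A i j * x j) = (lam k : ℂ) * (d i : ℂ) * x i := hAx i
      have h2 : (∑ j, A i j * x j) = A i i * x i + ∑ j ∈ Finset.univ.erase i, A i j * x j :=
        (Finset.add_sum_erase _ _ (Finset.mem_univ i)).symm
      rw [h1, hAd i] at h2
      linear_combination h2
    have habs : |lam k - 1| * (d i * ‖x i‖) ≤ ρ * (d i * ‖x i‖) := by
      have h1 : ‖((lam k : ℂ) - 1) * (d i : ℂ) * x i‖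
          = |lam k - 1| * (d i * ‖x i‖) := by
        rw [norm_mul, norm_mul]
        have : ((lam k : ℂ) - 1) = ((lam k - 1 : ℝ) : ℂ) := by push_cast; ring
        rw [this, Complex.norm_real, Complex.norm_real, Real.norm_eq_abs, Real.norm_eq_abs, abs_of_pos (hd i)]
        ring
      have h2 : ‖∑ j ∈ Finset.univ.erase i, A i j * x j‖
          ≤ ρ * (d i * ‖x i‖) := by
        calc ‖∑ j ∈ Finset.univ.erase i, A i j * x j‖
            ≤ ∑ j ∈ Finset.univ.erase i, ‖A i j * x j‖ := by
              exact norm_sum_le _ _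
          _ = ∑ j ∈ Finset.univ.erase i, ‖A i j‖ * ‖x j‖ := by
              simp [_root_.map_mul]
          _ ≤ ∑ j ∈ Finset.univ.erase i, ‖A i j‖ * ‖x i‖ :=
              Finset.sum_le_sum fun j _ => by
                exact mul_le_mul_of_nonneg_left (hi j (Finset.mem_univ j))
                  (norm_nonneg _)
          _ = (∑ j ∈ Finset.univ.erase i, ‖A i j‖) * ‖x i‖ := by
              rw [← Finset.sum_mul]
          _ ≤ (ρ * d i) * ‖x i‖ :=
              mul_le_mul_of_nonneg_right (hrow i) (norm_nonneg _)
          _ = ρ * (d i * ‖x i‖) := by ring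
      rw [← h1, heq]
      exact h2
    have hpos : 0 < d i * ‖x i‖ := mul_pos (hd i) hxi
    exact le_of_mul_le_mul_right habs hpos
  -- positivity of eigenvalues (in fact ≥ 1 - ρ)
  have hlam_lb : ∀ k, 1 - ρ ≤ lam k := by
    intro k
    have := (abs_le.mp (hgersh k)).1
    linarith
  have hlam_pos : ∀ k, 0 < lam k := fun k => lt_of_lt_of_le (by linarith) (hlam_lb k)
  -- trace of B is n, and equals sum of eigenvalues
  have hBdiag : ∀ i, B i i = 1 := by
    intro i
    have : B i i = σ i * A i i * σ i := by
      simp [hB_def, Matrix.mul_apply, Matrix.diagonal, Finset.sum_ite_eq,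
        Finset.sum_ite_eq']
    rw [this, hAd i]
    calc σ i * (d i : ℂ) * σ i = σ i * σ i * (d i : ℂ) := by ring
      _ = 1 := hkey i
  have htraceB : B.trace = (n : ℂ) := by
    unfold Matrix.trace
    simp only [Matrix.diag_apply]
    rw [Finset.sum_congr rfl fun i _ => hBdiag i]
    simp
  have htrace_eig : ∑ k, (lam k : ℂ) = (n : ℂ) := by
    have hspec := hB.spectral_theorem
    have h1 : B.trace = (Matrix.diagonal (RCLike.ofReal ∘ hB.eigenvalues)
        : Matrix (Fin n) (Fin n) ℂ).trace := by
      conv_lhs => rw [hspec, Unitary.conjStarAlgAut_apply]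
      rw [Matrix.trace_mul_cycle]
      have hu : (star (hB.eigenvectorUnitary : Matrix (Fin n) (Fin n) ℂ)) *
          (hB.eigenvectorUnitary : Matrix (Fin n) (Fin n) ℂ) = 1 :=
        (hB.eigenvectorUnitary).prop.1
      rw [hu, Matrix.one_mul]
    rw [htraceB] at h1
    rw [← h1.symm]
    simp [Matrix.trace_diagonal, hlam_def]
  have hsum_lam : ∑ k, lam k = (n : ℝ) := by
    have : ((∑ k, lam k : ℝ) : ℂ) = ((n : ℝ) : ℂ) := by
      push_cast
      exact htrace_eig
    exact_mod_cast this
  -- determinant identity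
  have hdetB : (∏ i, σ i) * A.det * (∏ i, σ i) = ∏ k, (lam k : ℂ) := by
    have h1 : B.det = (∏ i, σ i) * A.det * (∏ i, σ i) := by
      rw [hB_def, Matrix.det_mul, Matrix.det_mul, Matrix.det_diagonal]
    rw [← h1, hB.det_eq_prod_eigenvalues, hlam_def]; rfl
  have hone : (∏ i, (d i : ℂ)) * ((∏ i, σ i) * (∏ i, σ i)) = 1 := by
    have key' : ∀ i ∈ Finset.univ, (d i : ℂ) * (σ i * σ i) = 1 := fun i _ => by
      rw [← hkey i]; ring
    calc (∏ i, (d i : ℂ)) * ((∏ i, σ i) * (∏ i, σ i))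
        = ∏ i, ((d i : ℂ) * (σ i * σ i)) := by
          rw [Finset.prod_mul_distrib, Finset.prod_mul_distrib]
      _ = 1 := by rw [Finset.prod_congr rfl key']; simp
  have hdetA : A.det = (∏ i, (d i : ℂ)) * ∏ k, (lam k : ℂ) := by
    calc A.det = ((∏ i, (d i : ℂ)) * ((∏ i, σ i) * (∏ i, σ i))) * A.det := by
          rw [hone]; ring
      _ = (∏ i, (d i : ℂ)) * ((∏ i, σ i) * A.det * (∏ i, σ i)) := by ring
      _ = (∏ i, (d i : ℂ)) * ∏ k, (lam k : ℂ) := by rw [hdetB]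
  have hre : A.det.re = (∏ i, d i) * ∏ k, lam k := by
    have : A.det = (((∏ i, d i) * ∏ k, lam k : ℝ) : ℂ) := by
      rw [hdetA]; push_cast; ring
    rw [this, Complex.ofReal_re]
  have hlog : Real.log A.det.re = (∑ i, Real.log (d i)) + ∑ k, Real.log (lam k) := by
    rw [hre, Real.log_mul (Finset.prod_pos (fun i _ => hd i)).ne'
      (Finset.prod_pos (fun k _ => hlam_pos k)).ne',
      Real.log_prod (fun i _ => (hd i).ne'),
      Real.log_prod (fun k _ => (hlam_pos k).ne')]
  have h1ρ : (0 : ℝ) < 1 - ρ := by linarith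
  constructor
  · -- lower bound
    rw [hlog]
    have : (n : ℝ) * Real.log (1 - ρ) ≤ ∑ k, Real.log (lam k) := by
      calc (n : ℝ) * Real.log (1 - ρ) = ∑ _k : Fin n, Real.log (1 - ρ) := by
            rw [Finset.sum_const, Finset.card_univ, Fintype.card_fin, nsmul_eq_mul]
        _ ≤ ∑ k, Real.log (lam k) :=
            Finset.sum_le_sum fun k _ => Real.log_le_log h1ρ (hlam_lb k)
    linarith
  · -- upper bound
    rw [hlog]
    have : ∑ k, Real.log (lam k) ≤ 0 := by
      calc ∑ k, Real.log (lam k) ≤ ∑ k, (lam k - 1) :=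
            Finset.sum_le_sum fun k _ => Real.log_le_sub_one_of_pos (hlam_pos k)
        _ = (∑ k, lam k) - n := by
            rw [Finset.sum_sub_distrib]
            simp
      linarith [hsum_lam]
    linarith
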